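/- In the fixed-effects regression of the long-differenced outcome on the treatment indicator and cell intercepts, suppose weighted least squares assigns a common positive weight λ_{g,h} to all observations in cell g. Then the population coefficient on the treatment indicator equals Σ_g ω_{g,h}(λ) δ_{g,h} with ω_{g,h}(λ) = λ_{g,h} N_{g,h} n_{g,h} (1 − n_{g,h}) / Σ_{g'} λ_{g',h} N_{g',h} n_{g',h} (1 − n_{g',h}). -/
import Mathlib
open Finset

lemma cell_split {ι γ : Type*} [Fintype ι] [DecidableEq γ]
    (cell : ι → γ) (D : ι → Bool) (g : γ) (f : ι → ℝ) :
    ∑ i ∈ univ.filter (fun i => cell i = g), f i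
    = (∑ i ∈ univ.filter (fun i => cell i = g ∧ D i = true), f i)
    + ∑ i ∈ univ.filter (fun i => cell i = g ∧ D i = false), f i := by
  rw [← Finset.sum_filter_add_sum_filter_not (univ.filter fun i => cell i = g)
      (fun i => D i = true) f, Finset.filter_filter, Finset.filter_filter]
  congr 2
  ext i
  simp [Bool.not_eq_true]

lemma cell_card {ι γ : Type*} [Fintype ι] [DecidableEq γ]
    (cell : ι → γ) (D : ι → Bool) (g : γ) :
    (univ.filter fun i => cell i = g).card
    = (univ.filter fun i => cell i = g ∧ D i = true).card
    + (univ.filter fun i => cell i = g ∧ D i = false).card := by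
  have := cell_split cell D g (fun _ => (1 : ℝ))
  simpa [Finset.sum_const, ← Nat.cast_add] using this

/-- WLS weighting formula: assigning a common positive weight λ_{g,h} to all
observations of cell g, the population coefficient on the treatment indicator
in the cell-fixed-effects regression equals the λ-reweighted variance-weighted
average of the within-cell contrasts δ_{g,h}. -/
theorem lpdid_wls_weights
    {ι γ : Type*} [Fintype ι] [Fintype γ] [DecidableEq γ]
    (cell : ι → γ) (D : ι → Bool) (Y : ι → ℝ)
    (lam : γ → ℝ) (hlam : ∀ g, 0 < lam g)   -- common positive cell weights
    (Ngh Ng : γ → ℕ) (n : γ → ℝ) (δ : γ → ℝ)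
    (hNgh : ∀ g, Ngh g = (univ.filter fun i => cell i = g).card)
    (hNg : ∀ g, Ng g = (univ.filter fun i => cell i = g ∧ D i = true).card)
    (hn : ∀ g, n g = (Ng g : ℝ) / (Ngh g : ℝ))
    (htreated : ∀ g, 0 < Ng g) (hcontrol : ∀ g, Ng g < Ngh g)
    (hδ : ∀ g, δ g =
        (∑ i ∈ univ.filter (fun i => cell i = g ∧ D i = true), Y i) / (Ng g : ℝ)
      - (∑ i ∈ univ.filter (fun i => cell i = g ∧ D i = false), Y i)
          / ((Ngh g : ℝ) - (Ng g : ℝ))) :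
    -- weighted FWL coefficient (residualization unchanged since λ is
    -- constant within each cell)
    (∑ i, lam (cell i) * ((if D i then (1 : ℝ) else 0) - n (cell i)) * Y i) /
      (∑ i, lam (cell i) * ((if D i then (1 : ℝ) else 0) - n (cell i)) ^ 2)
    =
    ∑ g, (lam g * (Ngh g : ℝ) * n g * (1 - n g) /
            ∑ g', lam g' * (Ngh g' : ℝ) * n g' * (1 - n g')) * δ g := by
  set A : γ → ℝ := fun g => lam g * (Ngh g : ℝ) * n g * (1 - n g) with hA
  -- basic positivity facts
  have hNghpos : ∀ g, (0 : ℝ) < (Ngh g : ℝ) := fun g => by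
    exact_mod_cast (htreated g).trans (hcontrol g)
  have hNgpos : ∀ g, (0 : ℝ) < (Ng g : ℝ) := fun g => by exact_mod_cast htreated g
  have hsub : ∀ g, (0 : ℝ) < (Ngh g : ℝ) - (Ng g : ℝ) := fun g => by
    have : (Ng g : ℝ) < (Ngh g : ℝ) := by exact_mod_cast hcontrol g
    linarith
  have hnpos : ∀ g, 0 < n g := fun g => by
    rw [hn g]; exact div_pos (hNgpos g) (hNghpos g)
  have hnlt : ∀ g, n g < 1 := fun g => by
    rw [hn g]; rw [div_lt_one (hNghpos g)]; exact_mod_cast hcontrol g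
  have hApos : ∀ g, 0 < A g := fun g => by
    have h1 := hnpos g; have h2 := hnlt g
    have := mul_pos (mul_pos (mul_pos (hlam g) (hNghpos g)) h1) (by linarith : (0:ℝ) < 1 - n g)
    simpa [hA] using this
  -- numerator
  have hcard0 : ∀ g, ((univ.filter fun i => cell i = g ∧ D i = false).card : ℝ)
      = (Ngh g : ℝ) - (Ng g : ℝ) := fun g => by
    have := cell_card cell D g
    rw [hNgh g, hNg g]
    push_cast [this]
    ring
  have hnum : (∑ i, lam (cell i) * ((if D i then (1 : ℝ) else 0) - n (cell i)) * Y i)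
      = ∑ g, A g * δ g := by
    rw [← Finset.sum_fiberwise univ cell
      (fun i => lam (cell i) * ((if D i then (1 : ℝ) else 0) - n (cell i)) * Y i)]
    refine Finset.sum_congr rfl fun g _ => ?_
    have hc : ∀ i ∈ univ.filter (fun i => cell i = g),
        lam (cell i) * ((if D i then (1 : ℝ) else 0) - n (cell i)) * Y i
        = lam g * ((if D i then (1 : ℝ) else 0) - n g) * Y i := fun i hi => by
      have : cell i = g := (Finset.mem_filter.mp hi).2
      rw [this]
    rw [Finset.sum_congr rfl hc, cell_split cell D g]
    have h1 : ∀ i ∈ univ.filter (fun i => cell i = g ∧ D i = true),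
        lam g * ((if D i then (1 : ℝ) else 0) - n g) * Y i
        = lam g * (1 - n g) * Y i := fun i hi => by
      have : D i = true := (Finset.mem_filter.mp hi).2.2
      rw [this]; simp
    have h0 : ∀ i ∈ univ.filter (fun i => cell i = g ∧ D i = false),
        lam g * ((if D i then (1 : ℝ) else 0) - n g) * Y i
        = -(lam g * n g) * Y i := fun i hi => by
      have : D i = false := (Finset.mem_filter.mp hi).2.2
      rw [this]; simp only [Bool.false_eq_true, if_false]; ring
    rw [Finset.sum_congr rfl h1, Finset.sum_congr rfl h0,
      ← Finset.mul_sum, ← Finset.mul_sum]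
    have e1 := (hNgpos g).ne'
    have e2 := (hNghpos g).ne'
    have e3 := (hsub g).ne'
    simp only [hA, hδ, hn]
    field_simp
    ring
  -- denominator
  have hden : (∑ i, lam (cell i) * ((if D i then (1 : ℝ) else 0) - n (cell i)) ^ 2)
      = ∑ g, A g := by
    rw [← Finset.sum_fiberwise univ cell
      (fun i => lam (cell i) * ((if D i then (1 : ℝ) else 0) - n (cell i)) ^ 2)]
    refine Finset.sum_congr rfl fun g _ => ?_
    have hc : ∀ i ∈ univ.filter (fun i => cell i = g),
        lam (cell i) * ((if D i then (1 : ℝ) else 0) - n (cell i)) ^ 2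
        = lam g * ((if D i then (1 : ℝ) else 0) - n g) ^ 2 := fun i hi => by
      have : cell i = g := (Finset.mem_filter.mp hi).2
      rw [this]
    rw [Finset.sum_congr rfl hc, cell_split cell D g]
    have h1 : ∀ i ∈ univ.filter (fun i => cell i = g ∧ D i = true),
        lam g * ((if D i then (1 : ℝ) else 0) - n g) ^ 2
        = lam g * (1 - n g) ^ 2 := fun i hi => by
      have : D i = true := (Finset.mem_filter.mp hi).2.2
      rw [this]; simp
    have h0 : ∀ i ∈ univ.filter (fun i => cell i = g ∧ D i = false),
        lam g * ((if D i then (1 : ℝ) else 0) - n g) ^ 2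
        = lam g * n g ^ 2 := fun i hi => by
      have : D i = false := (Finset.mem_filter.mp hi).2.2
      rw [this]; simp only [Bool.false_eq_true, if_false]; ring
    rw [Finset.sum_congr rfl h1, Finset.sum_congr rfl h0,
      Finset.sum_const, Finset.sum_const, ← hNg g, nsmul_eq_mul, nsmul_eq_mul,
      hcard0 g]
    have e2 := (hNghpos g).ne'
    simp only [hA, hn]
    field_simp
    ring
  rw [hnum, hden]
  rw [Finset.sum_div]
  exact Finset.sum_congr rfl fun g _ => by ring
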